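/- Let K be an algebraically closed field, V a nonzero finite-dimensional K-vector space, and T₁, …, T_m pairwise commuting K-linear endomorphisms of V. Then for all natural numbers k₁, …, k_m, every eigenvalue of the composite T₁^{k₁} ∘ T₂^{k₂} ∘ ⋯ ∘ T_m^{k_m} is of the form a₁^{k₁}·a₂^{k₂}⋯a_m^{k_m}, where each a_i is an eigenvalue of T_i. -/

import Mathlib

open Module

/-- A finite commuting family of endomorphisms of a nonzero finite-dimensional vector space over
an algebraically closed field has a common eigenvector. -/
lemma exists_common_eigenvector
    (K : Type*) [Field K] [IsAlgClosed K] :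
    ∀ (m : ℕ) (V : Type*) [AddCommGroup V] [Module K V] [FiniteDimensional K V] [Nontrivial V]
      (f : Fin m → Module.End K V), (∀ i j, Commute (f i) (f j)) →
      ∃ (v : V) (a : Fin m → K), v ≠ 0 ∧ ∀ i, f i v = a i • v := by
  intro m
  induction m with
  | zero =>
    intro V _ _ _ _ f _
    obtain ⟨v, hv⟩ := exists_ne (0 : V)
    exact ⟨v, fun i => 0, hv, fun i => i.elim0⟩
  | succ n ih =>
    intro V _ _ _ _ f hcomm
    obtain ⟨μ, hμ⟩ := Module.End.exists_eigenvalue (f 0)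
    set E := Module.End.eigenspace (f 0) μ with hE
    have hEne : E ≠ ⊥ := hμ
    have : Nontrivial E := Submodule.nontrivial_iff_ne_bot.mpr hEne
    have hmap : ∀ i : Fin n, Set.MapsTo (f i.succ) E E := by
      intro i
      have := Module.End.mapsTo_genEigenspace_of_comm (hcomm 0 i.succ) μ 1
      simpa [Module.End.eigenspace] using this
    obtain ⟨v, a, hv, hva⟩ := ih E (fun i => (f i.succ).restrict (fun x hx => hmap i hx))
      (by
        intro i j
        ext x
        have := LinearMap.congr_fun (hcomm i.succ j.succ) x.val
        simp only [Module.End.mul_apply] at this ⊢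
        simpa [LinearMap.restrict_apply] using this)
    refine ⟨v.val, Fin.cases μ a, ?_, ?_⟩
    · simpa using hv
    · intro i
      refine Fin.cases ?_ ?_ i
      · simpa [Module.End.mem_eigenspace_iff.mp v.2] using rfl
      · intro j
        have := congr_arg Subtype.val (hva j)
        simpa [LinearMap.restrict_apply] using this

lemma noncommProd_apply_eq_smul {K V ι : Type*} [Field K] [AddCommGroup V] [Module K V]
    (s : Finset ι) (g : ι → Module.End K V) (v : V) (c : ι → K) :
    ∀ (hc : (↑s : Set ι).Pairwise (Function.onFun Commute g)), (∀ i ∈ s, g i v = c i • v) →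
    s.noncommProd g hc v = (∏ i ∈ s, c i) • v := by
  induction s using Finset.cons_induction with
  | empty => simp
  | cons i s hi ihs =>
    intro hc h
    rw [Finset.noncommProd_cons, Finset.prod_cons]
    have h1 : s.noncommProd g (hc.mono (Finset.coe_subset.mpr (Finset.subset_cons hi))) v = (∏ j ∈ s, c j) • v :=
      ihs _ (fun j hj => h j (Finset.mem_cons_of_mem hj))
    simp only [Module.End.mul_apply, h1, map_smul, h i (Finset.mem_cons_self i s), smul_smul,
      mul_comm]

/-- Over an algebraically closed field, every eigenvalue of a product `T₁^{k₁} ∘ ⋯ ∘ T_m^{k_m}`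
of powers of pairwise commuting endomorphisms of a nonzero finite-dimensional vector space is a
corresponding product `a₁^{k₁} ⋯ a_m^{k_m}` of eigenvalues `a_i` of the `T_i`. -/
theorem eigenvalue_prod_pow_commuting
    (K : Type*) [Field K] [IsAlgClosed K]
    (V : Type*) [AddCommGroup V] [Module K V] [FiniteDimensional K V] [Nontrivial V]
    (m : ℕ) (T : Fin m → Module.End K V)
    (hcomm : ∀ i j, Commute (T i) (T j))
    (k : Fin m → ℕ) (μ : K)
    (hμ : Module.End.HasEigenvalue
      (Finset.univ.noncommProd (fun i => T i ^ k i)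
        (fun i _ j _ _ => (hcomm i j).pow_pow (k i) (k j))) μ) :
    ∃ a : Fin m → K, (∀ i, (T i).HasEigenvalue (a i)) ∧ μ = ∏ i, a i ^ k i := by
  set P := Finset.univ.noncommProd (fun i => T i ^ k i)
    (fun i _ j _ _ => (hcomm i j).pow_pow (k i) (k j)) with hP
  set E := Module.End.eigenspace P μ with hE
  have hEne : E ≠ ⊥ := hμ
  have : Nontrivial E := Submodule.nontrivial_iff_ne_bot.mpr hEne
  have hPcomm : ∀ i, Commute (T i) P := fun i =>
    Finset.noncommProd_commute _ _ _ _ (fun j _ => (hcomm i j).pow_right (k j))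
  have hmap : ∀ i, Set.MapsTo (T i) E E := by
    intro i
    have := Module.End.mapsTo_genEigenspace_of_comm (hPcomm i).symm μ 1
    simpa [Module.End.eigenspace] using this
  obtain ⟨v, a, hv, hva⟩ := exists_common_eigenvector K m E
    (fun i => (T i).restrict (fun x hx => hmap i hx))
    (by
      intro i j
      ext x
      have := LinearMap.congr_fun (hcomm i j) x.val
      simp only [Module.End.mul_apply] at this ⊢
      simpa [LinearMap.restrict_apply] using this)
  have hvv : (v : V) ≠ 0 := by simpa using hv
  have hva' : ∀ i, T i v.val = a i • v.val := by
    intro i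
    have := congr_arg Subtype.val (hva i)
    simpa [LinearMap.restrict_apply] using this
  have heig : ∀ i, (T i).HasEigenvalue (a i) := fun i =>
    Module.End.hasEigenvalue_of_hasEigenvector
      ⟨Module.End.mem_eigenspace_iff.mpr (hva' i), hvv⟩
  have hpow : ∀ i ∈ Finset.univ, (T i ^ k i) v.val = (a i ^ k i) • v.val := by
    intro i _
    induction k i with
    | zero => simp
    | succ n ihn => simp [pow_succ, Module.End.mul_apply, ihn, hva', smul_smul, mul_comm]
  have hPv : P v.val = (∏ i, a i ^ k i) • v.val :=
    noncommProd_apply_eq_smul _ _ _ _ _ hpow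
  have hPv' : P v.val = μ • v.val := Module.End.mem_eigenspace_iff.mp v.2
  refine ⟨a, heig, ?_⟩
  have := hPv'.symm.trans hPv
  by_contra hne
  exact hvv (by
    have h0 : (μ - ∏ i, a i ^ k i) • v.val = 0 := by rw [sub_smul, this, sub_self]
    exact (smul_eq_zero.mp h0).resolve_left (sub_ne_zero.mpr hne) |>.symm ▸ rfl)
  done
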